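/- Let A = T(V)/(R) be a quadratic algebra and p ≥ 2 not divisible by char(k). Then HK^hi_p(A)_0 ≅ 0: the map ∂_⌢: HK_p(A)_0 → HK_{p−1}(A)_1 induced by e_A ⌢_K − is injective. -/

import Mathlib

/- STATEMENT 13: Let `A = T(V)/(R)` be a quadratic algebra and `p ≥ 2` not divisible by
`char k`.  Then `HK^hi_p(A)_0 ≅ 0`: the map `∂⌢ : HK_p(A)_0 → HK_{p−1}(A)_1` induced by
`e_A ⌢K −` is injective.  Concretely, `HK_p(A)_0 = ker(b_K : W_p → V ⊗ W_{p−1})`, where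
`b_K` is the restriction to `W_p` of `1 − τ` with
`τ(v_1⊗…⊗v_p) = (−1)^{p−1} v_p⊗v_1⊗…⊗v_{p−1}`, `∂⌢(z) = [z]`, and the boundaries in
biweight `(p−1,1)` are the image of `(1 − τ)|_{W_p}`; injectivity of `∂⌢` says that a cycle
`z ∈ W_p` with `(1−τ)z = 0` which is a boundary must vanish. -/

open TensorProduct PiTensorProduct

variable (k : Type*) [Field k] (V : Type*) [AddCommGroup V] [Module k V]

open TensorProduct PiTensorProduct

variable (k : Type*) [Field k] (V : Type*) [AddCommGroup V] [Module k V]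

/-- The canonical equivalence `V^{⊗i} ⊗ V^{⊗j} ≃ V^{⊗(i+j)}`. -/
noncomputable def tpMul (i j : ℕ) : ((⨂[k]^i V) ⊗[k] (⨂[k]^j V)) ≃ₗ[k] ⨂[k]^(i + j) V :=
  (PiTensorProduct.tmulEquiv (ι := Fin i) (ι₂ := Fin j) k V).trans
    (PiTensorProduct.reindex k (fun _ => V) finSumFinEquiv)

variable {k V}

/-- The subspace `S ⊗ T` of `V^{⊗(i+j)}` attached to subspaces `S ⊆ V^{⊗i}`, `T ⊆ V^{⊗j}`. -/
noncomputable def sprod {i j : ℕ} (S : Submodule k (⨂[k]^i V)) (T : Submodule k (⨂[k]^j V)) :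
    Submodule k (⨂[k]^(i + j) V) :=
  Submodule.map (tpMul k V i j).toLinearMap (Submodule.map₂ (TensorProduct.mk k _ _) S T)

/-- Transport of subspaces of tensor powers along an equality of exponents. -/
noncomputable def scast {i j : ℕ} (h : i = j) (S : Submodule k (⨂[k]^i V)) :
    Submodule k (⨂[k]^j V) :=
  Submodule.map (PiTensorProduct.reindex k (fun _ => V) (finCongr h)).toLinearMap S

/-- The identification `V^{⊗1} ≃ V`. -/
noncomputable def e1 : (⨂[k]^1 V) ≃ₗ[k] V := PiTensorProduct.subsingletonEquiv (0 : Fin 1)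

/-- The identification `V^{⊗2} ≃ V ⊗ V`. -/
noncomputable def e2 : (⨂[k]^2 V) ≃ₗ[k] (V ⊗[k] V) :=
  (tpMul k V 1 1).symm.trans (TensorProduct.congr e1 e1)

/-- The Koszul subspaces `W p = ⋂_{i+2+j=p} V^{⊗i} ⊗ R ⊗ V^{⊗j}`; the intersection is empty
for `p = 0, 1`, so `W 0` and `W 1` are the whole ambient spaces (`k` resp. `V`). -/
noncomputable def W (R : Submodule k (V ⊗[k] V)) (p : ℕ) : Submodule k (⨂[k]^p V) :=
  ⨅ (i : ℕ), ⨅ (j : ℕ), ⨅ (_ : i + 2 + j = p),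
    scast (show i + (2 + j) = p by omega)
      (sprod (⊤ : Submodule k (⨂[k]^i V))
        (sprod (Submodule.map (e2 (k := k) (V := V)).symm.toLinearMap R)
          (⊤ : Submodule k (⨂[k]^j V))))


variable (k V)

/-- The signed cyclic permutation `τ(v_1⊗…⊗v_p) = (−1)^{p−1} v_p⊗v_1⊗…⊗v_{p−1}`. -/
noncomputable def tauCyc (p : ℕ) : (⨂[k]^p V) →ₗ[k] ⨂[k]^p V :=
  ((-1 : k) ^ (p - 1)) • (PiTensorProduct.reindex k (fun _ : Fin p => V) (finRotate p)).toLinearMap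

variable {k V}


open Fin.NatCast in
lemma finRotate_pow_apply' (m n : ℕ) (i : Fin (m + 1)) :
    ((finRotate (m + 1)) ^ n) i = i + (n : Fin (m + 1)) := by
  induction n generalizing i with
  | zero => simp
  | succ n ih =>
    rw [pow_succ, Equiv.Perm.mul_apply, finRotate_succ_apply, ih, Nat.cast_add,
      Nat.cast_one, add_assoc, add_comm 1 (n : Fin (m+1))]

lemma finRotate_pow_self' (m : ℕ) : (finRotate (m + 1)) ^ (m + 1) = 1 := by
  ext i
  rw [finRotate_pow_apply']
  simp

lemma reindex_pow_apply' (p n : ℕ) (x : ⨂[k]^p V) :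
    (((PiTensorProduct.reindex k (fun _ : Fin p => V) (finRotate p)).toLinearMap ^ n)) x
      = (PiTensorProduct.reindex k (fun _ : Fin p => V) ((finRotate p) ^ n)) x := by
  induction n generalizing x with
  | zero => simp [Equiv.Perm.one_def]
  | succ n ih =>
    rw [pow_succ, Module.End.mul_apply, LinearEquiv.coe_coe, ih]
    exact (PiTensorProduct.reindex_reindex (s := fun _ : Fin p => V) (finRotate p)
      ((finRotate p) ^ n) x).trans (by rw [pow_succ, Equiv.Perm.mul_def])

lemma tauCyc_pow_self (p : ℕ) (hp : 1 ≤ p) (x : ⨂[k]^p V) :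
    ((tauCyc k V p) ^ p) x = x := by
  obtain ⟨m, rfl⟩ := Nat.exists_eq_succ_of_ne_zero (Nat.one_le_iff_ne_zero.mp hp)
  rw [tauCyc, smul_pow, LinearMap.smul_apply, reindex_pow_apply', finRotate_pow_self']
  have hc : ((-1 : k) ^ (m + 1 - 1)) ^ (m + 1) = 1 := by
    rw [← pow_mul]
    exact (Nat.even_mul_succ_self m).neg_one_pow
  rw [hc, one_smul]
  simp [Equiv.Perm.one_def]

theorem higher_koszul_homology_weight_zero_injective (R : Submodule k (V ⊗[k] V))
    (p : ℕ) (hp2 : 2 ≤ p) (hpchar : (p : k) ≠ 0) :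
    ∀ z ∈ W R p, ((LinearMap.id : (⨂[k]^p V) →ₗ[k] ⨂[k]^p V) - tauCyc k V p) z = 0 →
      z ∈ Submodule.map ((LinearMap.id : (⨂[k]^p V) →ₗ[k] ⨂[k]^p V) - tauCyc k V p) (W R p) → z = 0 := by
  intro z _hzW hz hzB
  obtain ⟨w, _hwW, hw⟩ := hzB
  set T := tauCyc k V p with hT
  have hTz : T z = z := by
    have := sub_eq_zero.mp hz
    simpa using this.symm
  have hwz : w - T w = z := by simpa using hw
  have hTnz : ∀ n : ℕ, (T ^ n) z = z := by
    intro n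
    induction n with
    | zero => simp
    | succ n ih => rw [pow_succ', Module.End.mul_apply, ih, hTz]
  have key : ∀ n : ℕ, n • z = w - (T ^ n) w := by
    intro n
    induction n with
    | zero => simp
    | succ n ih =>
      have h1 : (T ^ n) z = (T ^ n) w - (T ^ (n + 1)) w := by
        rw [← hwz, map_sub, pow_succ, Module.End.mul_apply]
      rw [succ_nsmul, ih, ← hTnz n, h1]
      abel
  have hp1 : (1 : ℕ) ≤ p := le_trans (by norm_num) hp2
  have hfinal : p • z = 0 := by
    rw [key p, tauCyc_pow_self p hp1 w, sub_self]
  have : (p : k) • z = 0 := by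
    rw [Nat.cast_smul_eq_nsmul]; exact hfinal
  rcases smul_eq_zero.mp this with h | h
  · exact absurd h hpchar
  · exact h
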